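/- arXiv:2010.04349 — 2 statements merged into one kernel-verified Lean document; each statement's English description precedes it below -/
import Mathlib

section
/- Let Q be a symmetric bilinear form on n×n real matrices satisfying (1-δ)‖K‖_F² ≤ Q(K,K) ≤ (1+δ)‖K‖_F² for all matrices K of rank at most 2r. Then for all matrices K, L of rank at most 2r, |Q(K,L) - ⟨K,L⟩| ≤ 2δ‖K‖_F‖L‖_F. -/
open Matrix Module Finset

noncomputable def frob {m n : Type*} [Fintype m] [Fintype n] (A : Matrix m n ℝ) : ℝ :=
  Real.sqrt (∑ i, ∑ j, (A i j)^2)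

def finner {m n : Type*} [Fintype m] [Fintype n] (A B : Matrix m n ℝ) : ℝ :=
  ∑ i, ∑ j, A i j * B i j

section helpers
variable {m n : Type*} [Fintype m] [Fintype n]

lemma frob_nonneg (A : Matrix m n ℝ) : 0 ≤ frob A := Real.sqrt_nonneg _

lemma frob_sq (A : Matrix m n ℝ) : frob A ^ 2 = finner A A := by
  rw [frob, Real.sq_sqrt (by positivity)]
  simp [finner, sq]

lemma finner_comm (A B : Matrix m n ℝ) : finner A B = finner B A := by
  simp [finner, mul_comm]

lemma finner_add_left (A B C : Matrix m n ℝ) :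
    finner (A + B) C = finner A C + finner B C := by
  simp [finner, add_mul, Finset.sum_add_distrib]

lemma finner_add_right (A B C : Matrix m n ℝ) :
    finner A (B + C) = finner A B + finner A C := by
  simp [finner, mul_add, Finset.sum_add_distrib]

lemma finner_smul_left (c : ℝ) (A B : Matrix m n ℝ) :
    finner (c • A) B = c * finner A B := by
  simp [finner, Finset.mul_sum, mul_assoc]

lemma finner_smul_right (c : ℝ) (A B : Matrix m n ℝ) :
    finner A (c • B) = c * finner A B := by
  rw [finner_comm, finner_smul_left, finner_comm]

lemma finner_self_nonneg (A : Matrix m n ℝ) : 0 ≤ finner A A := by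
  rw [← frob_sq]; positivity

lemma eq_zero_of_frob_eq_zero {A : Matrix m n ℝ} (h : frob A = 0) : A = 0 := by
  have h2 : ∑ i, ∑ j, (A i j)^2 = 0 := by
    have := Real.sqrt_eq_zero (by positivity : (0:ℝ) ≤ ∑ i, ∑ j, (A i j)^2) |>.mp h
    exact this
  ext i j
  have hij : ∀ i ∈ (univ : Finset m), (∑ j, (A i j)^2) = 0 := by
    intro i _
    have := (Finset.sum_eq_zero_iff_of_nonneg (fun i _ => by positivity)).mp h2
    exact this i (mem_univ i)
  have := (Finset.sum_eq_zero_iff_of_nonneg (fun j _ => by positivity)).mp (hij i (mem_univ i))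
  have := this j (mem_univ j)
  simpa using pow_eq_zero_iff (n := 2) (by norm_num) |>.mp this

lemma frob_smul (c : ℝ) (A : Matrix m n ℝ) : frob (c • A) = |c| * frob A := by
  rw [frob, frob]
  have : ∑ i, ∑ j, ((c • A) i j)^2 = c^2 * ∑ i, ∑ j, (A i j)^2 := by
    simp [Finset.mul_sum, mul_pow]
  rw [this, Real.sqrt_mul (by positivity), Real.sqrt_sq_eq_abs]

lemma finner_sum_left {ι : Type*} (s : Finset ι) (f : ι → Matrix m n ℝ) (B : Matrix m n ℝ) :
    finner (∑ i ∈ s, f i) B = ∑ i ∈ s, finner (f i) B := by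
  classical
  induction s using Finset.cons_induction with
  | empty => simp [finner]
  | cons a s ha ih => rw [Finset.sum_cons, Finset.sum_cons, finner_add_left, ih]

lemma finner_sum_right {ι : Type*} (s : Finset ι) (A : Matrix m n ℝ) (g : ι → Matrix m n ℝ) :
    finner A (∑ i ∈ s, g i) = ∑ i ∈ s, finner A (g i) := by
  rw [finner_comm, finner_sum_left]
  simp [finner_comm]

lemma finner_vecMulVec (a c : m → ℝ) (b d : n → ℝ) :
    finner (vecMulVec a b) (vecMulVec c d) = (a ⬝ᵥ c) * (b ⬝ᵥ d) := by
  simp only [finner, vecMulVec_apply, dotProduct, Finset.sum_mul_sum]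
  congr 1; ext i; congr 1; ext j; ring

end helpers

section rank
variable {m n : ℕ}

lemma myrank_add_le (A B : Matrix (Fin m) (Fin n) ℝ) : (A + B).rank ≤ A.rank + B.rank := by
  rw [Matrix.rank, Matrix.rank, Matrix.rank, Matrix.mulVecLin_add]
  have h : LinearMap.range (A.mulVecLin + B.mulVecLin) ≤
      LinearMap.range A.mulVecLin ⊔ LinearMap.range B.mulVecLin := by
    rintro x ⟨y, rfl⟩
    exact Submodule.add_mem_sup (LinearMap.mem_range_self _ y) (LinearMap.mem_range_self _ y)
  exact (Submodule.finrank_mono h).trans (Submodule.finrank_add_le_finrank_add_finrank _ _)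

lemma myrank_smul_le (c : ℝ) (A : Matrix (Fin m) (Fin n) ℝ) : (c • A).rank ≤ A.rank := by
  have : c • A = (c • (1 : Matrix (Fin m) (Fin m) ℝ)) * A := by
    rw [Matrix.smul_mul, Matrix.one_mul]
  rw [this]
  exact Matrix.rank_mul_le_right _ _

lemma myrank_sub_le (A B : Matrix (Fin m) (Fin n) ℝ) : (A - B).rank ≤ A.rank + B.rank := by
  rw [sub_eq_add_neg]
  refine (myrank_add_le A (-B)).trans ?_
  have : (-B) = (-1 : ℝ) • B := by simp
  exact add_le_add le_rfl (by rw [this]; exact myrank_smul_le _ _)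

lemma myrank_vecMulVec_le (u : Fin m → ℝ) (v : Fin n → ℝ) : (vecMulVec u v).rank ≤ 1 := by
  rw [vecMulVec_eq (Fin 1)]
  exact (Matrix.rank_mul_le_right _ _).trans ((Matrix.rank_le_card_height _).trans (by simp))

lemma myrank_sum_le {ι : Type*} (s : Finset ι) (f : ι → Matrix (Fin m) (Fin n) ℝ) :
    (∑ i ∈ s, f i).rank ≤ ∑ i ∈ s, (f i).rank := by
  classical
  induction s using Finset.cons_induction with
  | empty => simp
  | cons a s ha ih =>
      rw [Finset.sum_cons, Finset.sum_cons]
      exact (myrank_add_le _ _).trans (add_le_add le_rfl ih)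

end rank

section split
variable {n : ℕ}

lemma split_lemma (r : ℕ) (K : Matrix (Fin n) (Fin n) ℝ) (hK : K.rank ≤ 2 * r) :
    ∃ K₁ K₂ : Matrix (Fin n) (Fin n) ℝ,
      K = K₁ + K₂ ∧ K₁.rank ≤ r ∧ K₂.rank ≤ r ∧ finner K₁ K₂ = 0 := by
  classical
  have hM : (Kᵀ * K).IsHermitian := by simpa using isHermitian_conjTranspose_mul_self K
  set v : Fin n → (Fin n → ℝ) := fun i => (hM.eigenvectorBasis i : EuclideanSpace ℝ (Fin n))
    with hv
  -- orthonormality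
  have horth : ∀ i j, v i ⬝ᵥ v j = if i = j then 1 else 0 := by
    intro i j
    have h := (orthonormal_iff_ite (𝕜 := ℝ)).mp hM.eigenvectorBasis.orthonormal i j
    rw [← h]
    simp [PiLp.inner_apply, dotProduct, RCLike.inner_apply, v, mul_comm]
  -- completeness via the orthogonal matrix V
  set V : Matrix (Fin n) (Fin n) ℝ := Matrix.of (fun i c => v i c) with hV
  have hVVt : V * Vᵀ = 1 := by
    ext i j
    rw [Matrix.mul_apply]
    have := horth i j
    simpa [V, dotProduct, Matrix.one_apply] using this
  have hVtV : Vᵀ * V = 1 := mul_eq_one_comm.mp hVVt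
  have hcompl : ∀ c b, ∑ i, v i c * v i b = if c = b then 1 else 0 := by
    intro c b
    have := congrFun (congrFun hVtV c) b
    rw [Matrix.mul_apply] at this
    simpa [V, Matrix.one_apply] using this
  -- eigen equation and consequences
  have heig : ∀ j, (Kᵀ * K) *ᵥ v j = hM.eigenvalues j • v j := fun j =>
    hM.mulVec_eigenvectorBasis j
  have hdot : ∀ i j, (K *ᵥ v i) ⬝ᵥ (K *ᵥ v j) = hM.eigenvalues j * (v i ⬝ᵥ v j) := by
    intro i j
    have h1 : (K *ᵥ v i) ⬝ᵥ (K *ᵥ v j) = v i ⬝ᵥ ((Kᵀ * K) *ᵥ v j) := by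
      conv_rhs => rw [← Matrix.mulVec_mulVec, Matrix.dotProduct_mulVec, Matrix.vecMul_transpose]
    rw [h1, heig j, dotProduct_smul, smul_eq_mul]
  have hker : ∀ i, hM.eigenvalues i = 0 → K *ᵥ v i = 0 := by
    intro i h0
    apply dotProduct_self_eq_zero.mp
    rw [hdot i i, h0, zero_mul]
  -- rank-one pieces
  set term : Fin n → Matrix (Fin n) (Fin n) ℝ := fun i => vecMulVec (K *ᵥ v i) (v i) with hterm
  have hcomp : K = ∑ i, term i := by
    ext a b
    have h1 : (∑ i, term i) a b = ∑ i, ∑ c, K a c * v i c * v i b := by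
      simp only [term, Matrix.sum_apply, vecMulVec_apply, Matrix.mulVec, dotProduct,
        Finset.sum_mul]
    rw [h1, Finset.sum_comm]
    have h2 : ∀ c, ∑ i, K a c * v i c * v i b = K a c * ∑ i, v i c * v i b := by
      intro c
      rw [Finset.mul_sum]
      exact Finset.sum_congr rfl fun i _ => by ring
    rw [Finset.sum_congr rfl fun c _ => (h2 c).trans (by rw [hcompl c b])]
    simp
  -- choice of index sets
  set N : Finset (Fin n) := Finset.univ.filter (fun i => hM.eigenvalues i ≠ 0) with hN
  have hNcard : N.card ≤ 2 * r := by
    have h1 : Fintype.card {i // hM.eigenvalues i ≠ 0} = N.card := Fintype.card_subtype _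
    have h2 := hM.rank_eq_card_non_zero_eigs
    have h3 : (Kᵀ * K).rank = K.rank := Matrix.rank_transpose_mul_self K
    omega
  obtain ⟨S, hSN, hScard⟩ := Finset.exists_subset_card_eq (min_le_right r N.card)
  refine ⟨∑ i ∈ S, term i, ∑ i ∈ Sᶜ, term i,
    hcomp.trans (Finset.sum_add_sum_compl S term).symm, ?_, ?_, ?_⟩
  · refine (myrank_sum_le _ _).trans ?_
    calc ∑ i ∈ S, (term i).rank ≤ ∑ _i ∈ S, 1 :=
          Finset.sum_le_sum fun i _ => myrank_vecMulVec_le _ _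
      _ = S.card := by simp
      _ ≤ r := by rw [hScard]; exact min_le_left _ _
  · refine (myrank_sum_le _ _).trans ?_
    have hbound : ∀ i ∈ Sᶜ, (term i).rank ≤ if i ∈ N then 1 else 0 := by
      intro i _
      by_cases hi : i ∈ N
      · simpa [hi] using myrank_vecMulVec_le (K *ᵥ v i) (v i)
      · have h0 : hM.eigenvalues i = 0 := by
          by_contra h
          exact hi (Finset.mem_filter.mpr ⟨Finset.mem_univ i, h⟩)
        have : term i = 0 := by
          ext a b
          simp [term, vecMulVec_apply, hker i h0]
        simp [hi, this, Matrix.rank_zero]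
    refine (Finset.sum_le_sum hbound).trans ?_
    have h4 : ∑ i ∈ Sᶜ, (if i ∈ N then 1 else 0) = (Sᶜ ∩ N).card := by
      rw [Finset.sum_ite_mem]
      simp
    rw [h4]
    have h5 : Sᶜ ∩ N = N \ S := by
      ext x
      simp [Finset.mem_sdiff, Finset.mem_inter, Finset.mem_compl, and_comm]
    rw [h5, Finset.card_sdiff_of_subset hSN]
    omega
  · rw [finner_sum_left]
    refine Finset.sum_eq_zero fun i hi => ?_
    rw [finner_sum_right]
    refine Finset.sum_eq_zero fun j hj => ?_
    have hij : i ≠ j := fun h => (Finset.mem_compl.mp hj) (h ▸ hi)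
    show finner (vecMulVec (K *ᵥ v i) (v i)) (vecMulVec (K *ᵥ v j) (v j)) = 0
    rw [finner_vecMulVec, horth i j, if_neg hij, mul_zero]

end split

lemma finner_sub_left {m n : Type*} [Fintype m] [Fintype n] (A B C : Matrix m n ℝ) :
    finner (A - B) C = finner A C - finner B C := by
  simp [finner, sub_mul, Finset.sum_sub_distrib]

lemma finner_sub_right {m n : Type*} [Fintype m] [Fintype n] (A B C : Matrix m n ℝ) :
    finner A (B - C) = finner A B - finner A C := by
  rw [finner_comm, finner_sub_left, finner_comm A B, finner_comm A C]

lemma polar_le {n r : ℕ} (δ : ℝ)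
    (Q : Matrix (Fin n) (Fin n) ℝ →ₗ[ℝ] Matrix (Fin n) (Fin n) ℝ →ₗ[ℝ] ℝ)
    (hsym : ∀ K L, Q K L = Q L K)
    (hRIP : ∀ K : Matrix (Fin n) (Fin n) ℝ, K.rank ≤ 2 * r →
      (1 - δ) * frob K ^ 2 ≤ Q K K ∧ Q K K ≤ (1 + δ) * frob K ^ 2)
    (A B : Matrix (Fin n) (Fin n) ℝ) (hA : A.rank ≤ r) (hB : B.rank ≤ r) :
    |Q A B - finner A B| ≤ δ * frob A * frob B := by
  have frob_zero : frob (0 : Matrix (Fin n) (Fin n) ℝ) = 0 := by simp [frob]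
  have key : ∀ C D : Matrix (Fin n) (Fin n) ℝ, C.rank ≤ r → D.rank ≤ r →
      |Q C D - finner C D| ≤ δ / 2 * (frob C ^ 2 + frob D ^ 2) := by
    intro C D hC hD
    have h1 := hRIP (C + D) ((myrank_add_le C D).trans (by omega))
    have h2 := hRIP (C - D) ((myrank_sub_le C D).trans (by omega))
    have e1 : Q (C + D) (C + D) = Q C C + 2 * Q C D + Q D D := by
      simp only [map_add, LinearMap.add_apply]
      rw [hsym D C]; ring
    have e2 : Q (C - D) (C - D) = Q C C - 2 * Q C D + Q D D := by
      simp only [map_sub, LinearMap.sub_apply]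
      rw [hsym D C]; ring
    have f1 : frob (C + D) ^ 2 = frob C ^ 2 + 2 * finner C D + frob D ^ 2 := by
      rw [frob_sq, frob_sq, frob_sq, finner_add_left, finner_add_right, finner_add_right,
        finner_comm D C]; ring
    have f2 : frob (C - D) ^ 2 = frob C ^ 2 - 2 * finner C D + frob D ^ 2 := by
      rw [frob_sq, frob_sq, frob_sq, finner_sub_left, finner_sub_right, finner_sub_right,
        finner_comm D C]; ring
    rw [e1, f1] at h1
    rw [e2, f2] at h2
    rw [abs_le]
    constructor
    · nlinarith [h1.1, h2.2]
    · nlinarith [h1.2, h2.1]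
  rcases eq_or_ne (frob A) 0 with hA0 | hA0
  · rw [eq_zero_of_frob_eq_zero hA0] at *
    simp only [map_zero, LinearMap.zero_apply, frob_zero]
    have : finner (0 : Matrix (Fin n) (Fin n) ℝ) B = 0 := by simp [finner]
    rw [this]
    simp
  rcases eq_or_ne (frob B) 0 with hB0 | hB0
  · rw [eq_zero_of_frob_eq_zero hB0] at *
    simp only [map_zero, frob_zero]
    have : finner A (0 : Matrix (Fin n) (Fin n) ℝ) = 0 := by simp [finner]
    rw [this]
    simp
  · have ha : 0 < frob A := lt_of_le_of_ne (frob_nonneg A) (Ne.symm hA0)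
    have hb : 0 < frob B := lt_of_le_of_ne (frob_nonneg B) (Ne.symm hB0)
    have hA' : ((frob A)⁻¹ • A).rank ≤ r := (myrank_smul_le _ _).trans hA
    have hB' : ((frob B)⁻¹ • B).rank ≤ r := (myrank_smul_le _ _).trans hB
    have hfa : frob ((frob A)⁻¹ • A) = 1 := by
      rw [frob_smul, abs_of_pos (by positivity)]
      field_simp
    have hfb : frob ((frob B)⁻¹ • B) = 1 := by
      rw [frob_smul, abs_of_pos (by positivity)]
      field_simp
    have hkey := key ((frob A)⁻¹ • A) ((frob B)⁻¹ • B) hA' hB'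
    rw [hfa, hfb] at hkey
    have hq : Q ((frob A)⁻¹ • A) ((frob B)⁻¹ • B)
        = (frob A)⁻¹ * ((frob B)⁻¹ * Q A B) := by
      rw [_root_.map_smul, _root_.map_smul, LinearMap.smul_apply]
      simp only [smul_eq_mul]
      ring
    have hf : finner ((frob A)⁻¹ • A) ((frob B)⁻¹ • B)
        = (frob A)⁻¹ * ((frob B)⁻¹ * finner A B) := by
      rw [finner_smul_left, finner_smul_right]
    rw [hq, hf] at hkey
    have h3 : (frob A)⁻¹ * (frob B)⁻¹ * |Q A B - finner A B| ≤ δ := by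
      have habs : |(frob A)⁻¹ * ((frob B)⁻¹ * Q A B)
          - (frob A)⁻¹ * ((frob B)⁻¹ * finner A B)|
          = (frob A)⁻¹ * (frob B)⁻¹ * |Q A B - finner A B| := by
        rw [show (frob A)⁻¹ * ((frob B)⁻¹ * Q A B)
            - (frob A)⁻¹ * ((frob B)⁻¹ * finner A B)
            = ((frob A)⁻¹ * (frob B)⁻¹) * (Q A B - finner A B) from by ring,
          abs_mul, abs_of_pos (by positivity)]
      rw [habs] at hkey
      calc (frob A)⁻¹ * (frob B)⁻¹ * |Q A B - finner A B| ≤ δ / 2 * (1 ^ 2 + 1 ^ 2) := hkey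
        _ = δ := by ring
    have h4 := mul_le_mul_of_nonneg_left h3 (mul_pos ha hb).le
    have h5 : frob A * frob B * ((frob A)⁻¹ * (frob B)⁻¹ * |Q A B - finner A B|)
        = |Q A B - finner A B| := by
      field_simp
    linarith [h4, h5.le, h5.ge]

set_option maxHeartbeats 1000000 in
theorem stmt_1 {n r : ℕ} (δ : ℝ) (hδ0 : 0 ≤ δ) (hδ1 : δ < 1)
    (Q : Matrix (Fin n) (Fin n) ℝ →ₗ[ℝ] Matrix (Fin n) (Fin n) ℝ →ₗ[ℝ] ℝ)
    (hsym : ∀ K L, Q K L = Q L K)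
    (hRIP : ∀ K : Matrix (Fin n) (Fin n) ℝ, K.rank ≤ 2 * r →
      (1 - δ) * frob K ^ 2 ≤ Q K K ∧ Q K K ≤ (1 + δ) * frob K ^ 2)
    (K L : Matrix (Fin n) (Fin n) ℝ) (hK : K.rank ≤ 2 * r) (hL : L.rank ≤ 2 * r) :
    |Q K L - finner K L| ≤ 2 * δ * frob K * frob L := by
  obtain ⟨K₁, K₂, hKeq, hK1, hK2, hKo⟩ := split_lemma r K hK
  obtain ⟨L₁, L₂, hLeq, hL1, hL2, hLo⟩ := split_lemma r L hL
  have hq : Q K L = Q K₁ L₁ + Q K₁ L₂ + Q K₂ L₁ + Q K₂ L₂ := by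
    rw [hKeq, hLeq]
    simp only [map_add, LinearMap.add_apply]
    ring
  have hf : finner K L = finner K₁ L₁ + finner K₁ L₂ + finner K₂ L₁ + finner K₂ L₂ := by
    rw [hKeq, hLeq, finner_add_left, finner_add_right, finner_add_right]
    ring
  have b11 := polar_le δ Q hsym hRIP K₁ L₁ hK1 hL1
  have b12 := polar_le δ Q hsym hRIP K₁ L₂ hK1 hL2
  have b21 := polar_le δ Q hsym hRIP K₂ L₁ hK2 hL1
  have b22 := polar_le δ Q hsym hRIP K₂ L₂ hK2 hL2
  have hKn : frob K ^ 2 = frob K₁ ^ 2 + frob K₂ ^ 2 := by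
    rw [hKeq, frob_sq, frob_sq, frob_sq, finner_add_left, finner_add_right, finner_add_right,
      finner_comm K₂ K₁, hKo]
    ring
  have hLn : frob L ^ 2 = frob L₁ ^ 2 + frob L₂ ^ 2 := by
    rw [hLeq, frob_sq, frob_sq, frob_sq, finner_add_left, finner_add_right, finner_add_right,
      finner_comm L₂ L₁, hLo]
    ring
  -- (x1 + x2) ≤ √2 * frob K, etc.
  have sqrt_bound : ∀ (x1 x2 c : ℝ), 0 ≤ x1 → 0 ≤ x2 → 0 ≤ c → c ^ 2 = x1 ^ 2 + x2 ^ 2 →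
      x1 + x2 ≤ Real.sqrt 2 * c := by
    intro x1 x2 c h1 h2 hc hsq
    have hb : (x1 + x2) ^ 2 ≤ 2 * c ^ 2 := by nlinarith [sq_nonneg (x1 - x2)]
    calc x1 + x2 = Real.sqrt ((x1 + x2) ^ 2) := (Real.sqrt_sq (by positivity)).symm
      _ ≤ Real.sqrt (2 * c ^ 2) := Real.sqrt_le_sqrt hb
      _ = Real.sqrt 2 * c := by
          rw [Real.sqrt_mul (by norm_num), Real.sqrt_sq hc]
  have hx := sqrt_bound (frob K₁) (frob K₂) (frob K) (frob_nonneg _) (frob_nonneg _)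
    (frob_nonneg _) hKn
  have hy := sqrt_bound (frob L₁) (frob L₂) (frob L) (frob_nonneg _) (frob_nonneg _)
    (frob_nonneg _) hLn
  have hprod : (frob K₁ + frob K₂) * (frob L₁ + frob L₂) ≤ 2 * frob K * frob L := by
    have := mul_le_mul hx hy
      (by have := frob_nonneg L₁; have := frob_nonneg L₂; linarith)
      (mul_nonneg (Real.sqrt_nonneg 2) (frob_nonneg K))
    have h2 : Real.sqrt 2 * frob K * (Real.sqrt 2 * frob L) = 2 * frob K * frob L := by
      rw [show Real.sqrt 2 * frob K * (Real.sqrt 2 * frob L)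
          = (Real.sqrt 2 * Real.sqrt 2) * (frob K * frob L) from by ring,
        Real.mul_self_sqrt (by norm_num)]
      ring
    linarith [this, h2.le, h2.ge]
  have hX : Q K L - finner K L = (Q K₁ L₁ - finner K₁ L₁) + (Q K₁ L₂ - finner K₁ L₂)
      + (Q K₂ L₁ - finner K₂ L₁) + (Q K₂ L₂ - finner K₂ L₂) := by
    rw [hq, hf]; ring
  have hδprod := mul_le_mul_of_nonneg_left hprod hδ0
  rw [hX, abs_le]
  have a11 := abs_le.mp b11
  have a12 := abs_le.mp b12
  have a21 := abs_le.mp b21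
  have a22 := abs_le.mp b22
  constructor <;> linarith [a11.1, a11.2, a12.1, a12.2, a21.1, a21.2, a22.1, a22.2, hδprod]
end

section
/- Let X, Y ∈ ℝ^{n×r} be matrices such that XᵀY is symmetric. Then ‖XYᵀ + YXᵀ‖_F² ≥ 2λ_r(XXᵀ)·‖Y‖_F², where λ_r(XXᵀ) is the r-th largest eigenvalue of XXᵀ. -/
open Matrix

/-- The `k`-th largest eigenvalue (1-indexed) of a Hermitian real matrix. -/
noncomputable def kthLargestEig {n : ℕ} (A : Matrix (Fin n) (Fin n) ℝ)
    (hA : A.IsHermitian) (k : ℕ) : ℝ :=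
  ((Finset.univ.val.map hA.eigenvalues).sort (· ≤ ·)).getD (n - k) 0

lemma frob_sq_s11 {m p : Type*} [Fintype m] [Fintype p] (A : Matrix m p ℝ) :
    frob A ^ 2 = Matrix.trace (Aᵀ * A) := by
  unfold frob
  rw [Real.sq_sqrt (by positivity)]
  simp only [Matrix.trace, Matrix.mul_apply, Matrix.diag, Matrix.transpose_apply]
  rw [Finset.sum_comm]
  simp [pow_two]

lemma trace_conj_nonneg {m p : Type*} [Fintype m] [Fintype p]
    {N : Matrix m m ℝ} (hN : N.PosSemidef) (Z : Matrix m p ℝ) :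
    0 ≤ Matrix.trace (Zᵀ * N * Z) := by
  have h : ∀ k, (Zᵀ * N * Z) k k = (fun i => Z i k) ⬝ᵥ (N *ᵥ (fun i => Z i k)) := by
    intro k
    rw [Matrix.mul_assoc, Matrix.mul_apply]
    simp [dotProduct, Matrix.mulVec, Matrix.mul_apply]
  have h2 : Matrix.trace (Zᵀ * N * Z) = ∑ k, (fun i => Z i k) ⬝ᵥ (N *ᵥ (fun i => Z i k)) := by
    simp only [Matrix.trace, Matrix.diag, h]
  rw [h2]
  apply Finset.sum_nonneg
  intro k _
  simpa using hN.dotProduct_mulVec_nonneg (fun i => Z i k)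

lemma trace_conj_lower {m p : Type*} [Fintype m] [Fintype p] [DecidableEq m]
    {M : Matrix m m ℝ} {c : ℝ} (h : (M - c • 1).PosSemidef) (Z : Matrix m p ℝ) :
    c * Matrix.trace (Zᵀ * Z) ≤ Matrix.trace (Zᵀ * M * Z) := by
  have h0 := trace_conj_nonneg h Z
  have e : Zᵀ * (M - c • 1) * Z = Zᵀ * M * Z - c • (Zᵀ * Z) := by
    rw [Matrix.mul_sub, Matrix.sub_mul]
    congr 1
    rw [Matrix.mul_smul, Matrix.smul_mul, Matrix.mul_one]
  rw [e, Matrix.trace_sub, Matrix.trace_smul, sub_nonneg, smul_eq_mul] at h0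
  exact h0

lemma spectral_sub {n : ℕ} {M : Matrix (Fin n) (Fin n) ℝ} (hM : M.IsHermitian) (c : ℝ) :
    M - c • 1 = (hM.eigenvectorUnitary : Matrix (Fin n) (Fin n) ℝ) *
      Matrix.diagonal (fun i => hM.eigenvalues i - c) *
      star (hM.eigenvectorUnitary : Matrix (Fin n) (Fin n) ℝ) := by
  set U : Matrix (Fin n) (Fin n) ℝ := (hM.eigenvectorUnitary : Matrix (Fin n) (Fin n) ℝ)
  have hUU : U * star U = 1 := (Matrix.mem_unitaryGroup_iff).mp hM.eigenvectorUnitary.2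
  have hdiag : Matrix.diagonal (fun i => hM.eigenvalues i - c)
      = Matrix.diagonal (RCLike.ofReal ∘ hM.eigenvalues) - c • (1 : Matrix (Fin n) (Fin n) ℝ) := by
    rw [Matrix.smul_one_eq_diagonal, ← Matrix.diagonal_sub]
    rfl
  have hspec : U * Matrix.diagonal (RCLike.ofReal ∘ hM.eigenvalues) * star U = M :=
    hM.spectral_theorem.symm
  rw [hdiag, Matrix.mul_sub, Matrix.sub_mul, hspec]
  congr 1
  rw [Matrix.mul_smul, Matrix.smul_mul, Matrix.mul_one, hUU]

lemma posSemidef_of_le_eigenvalues {n : ℕ} {M : Matrix (Fin n) (Fin n) ℝ} (hM : M.IsHermitian)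
    {c : ℝ} (hc : ∀ i, c ≤ hM.eigenvalues i) : (M - c • 1).PosSemidef := by
  rw [spectral_sub hM c]
  exact (Matrix.posSemidef_diagonal_iff.mpr
    fun i => sub_nonneg.mpr (hc i)).mul_mul_conjTranspose_same _

lemma det_sub_smul_one {n : ℕ} {M : Matrix (Fin n) (Fin n) ℝ} (hM : M.IsHermitian) (c : ℝ) :
    (M - c • 1).det = ∏ i, (hM.eigenvalues i - c) := by
  set U : Matrix (Fin n) (Fin n) ℝ := (hM.eigenvectorUnitary : Matrix (Fin n) (Fin n) ℝ)
  have hUU : U * star U = 1 := (Matrix.mem_unitaryGroup_iff).mp hM.eigenvectorUnitary.2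
  have h1 : U.det * (star U).det = 1 := by rw [← Matrix.det_mul, hUU, Matrix.det_one]
  rw [spectral_sub hM c, Matrix.det_mul, Matrix.det_mul, Matrix.det_diagonal,
    mul_right_comm, h1, one_mul]

lemma exists_eig_eq {n : ℕ} {M : Matrix (Fin n) (Fin n) ℝ} (hM : M.IsHermitian) {c : ℝ}
    {v : Fin n → ℝ} (hv : v ≠ 0) (heq : M *ᵥ v = c • v) : ∃ i, hM.eigenvalues i = c := by
  by_contra hc
  push_neg at hc
  have hdet : IsUnit (M - c • 1).det := by
    rw [det_sub_smul_one hM c]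
    exact (Finset.prod_ne_zero_iff.mpr fun i _ => sub_ne_zero.mpr (hc i)).isUnit
  have h0 : (M - c • 1) *ᵥ v = 0 := by
    rw [Matrix.sub_mulVec, heq, Matrix.smul_mulVec, Matrix.one_mulVec, sub_self]
  apply hv
  have := congrArg (fun w => (M - c • 1)⁻¹ *ᵥ w) h0
  simpa [Matrix.mulVec_mulVec, Matrix.nonsing_inv_mul _ hdet] using this

lemma sorted_getD_le {s : Multiset ℝ} {k : ℕ} {m : ℝ}
    (h : k + 1 ≤ Multiset.card (s.filter (fun x => x ≤ m))) :
    (s.sort (· ≤ ·)).getD k 0 ≤ m := by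
  set l := s.sort (· ≤ ·) with hl
  have hsorted : l.Pairwise (· ≤ ·) := Multiset.pairwise_sort _ _
  have hperm : (l : Multiset ℝ) = s := Multiset.sort_eq _ _
  have hcount : l.countP (fun x => decide (x ≤ m)) = Multiset.card (s.filter (fun x => x ≤ m)) := by
    rw [← hperm, ← Multiset.countP_eq_card_filter]
    rfl
  by_contra hlt
  push_neg at hlt
  have hklen : k < l.length := by
    have : l.countP (fun x => decide (x ≤ m)) ≤ l.length := List.countP_le_length
    omega
  have hget : l.getD k 0 = l[k] := List.getD_eq_getElem l 0 hklen
  have hcle : l.countP (fun x => decide (x ≤ m)) ≤ k := by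
    have hsplit : l = l.take k ++ l.drop k := (List.take_append_drop k l).symm
    rw [hsplit, List.countP_append]
    have h1 : (l.take k).countP (fun x => decide (x ≤ m)) ≤ k := by
      have : (l.take k).countP (fun x => decide (x ≤ m)) ≤ (l.take k).length :=
        List.countP_le_length
      have := List.length_take_le k l
      omega
    have h2 : (l.drop k).countP (fun x => decide (x ≤ m)) = 0 := by
      rw [List.countP_eq_zero]
      intro a ha
      obtain ⟨j, hj, rfl⟩ := List.mem_iff_getElem.mp ha
      have hle : l[k] ≤ (l.drop k)[j] := by
        rw [List.getElem_drop]
        exact hsorted.rel_get_of_le (by simp)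
      simp only [decide_eq_true_eq]
      rw [hget] at hlt
      intro hc
      exact absurd (le_trans hle hc) (not_le.mpr hlt)
    omega
  omega

lemma trace_ident {n r : ℕ} (X Y : Matrix (Fin n) (Fin r) ℝ) (hsymm : (Xᵀ * Y).IsSymm) :
    Matrix.trace ((X * Yᵀ + Y * Xᵀ)ᵀ * (X * Yᵀ + Y * Xᵀ)) =
      2 * Matrix.trace (Yᵀ * (X * Xᵀ) * Y) + 2 * Matrix.trace (Y * (Xᵀ * X) * Yᵀ) := by
  have key2 : (Yᵀ * X : Matrix (Fin r) (Fin r) ℝ) = Xᵀ * Y := by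
    calc Yᵀ * X = (Xᵀ * Y)ᵀ := by rw [Matrix.transpose_mul, Matrix.transpose_transpose]
    _ = Xᵀ * Y := hsymm
  have expand : (X * Yᵀ + Y * Xᵀ)ᵀ * (X * Yᵀ + Y * Xᵀ) =
      (Y * Xᵀ) * (X * Yᵀ) + (Y * Xᵀ) * (Y * Xᵀ) + ((X * Yᵀ) * (X * Yᵀ) + (X * Yᵀ) * (Y * Xᵀ)) := by
    rw [Matrix.transpose_add, Matrix.transpose_mul, Matrix.transpose_mul,
      Matrix.transpose_transpose, Matrix.transpose_transpose, Matrix.add_mul, Matrix.mul_add,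
      Matrix.mul_add]
  rw [expand, Matrix.trace_add, Matrix.trace_add, Matrix.trace_add]
  have e1 : Matrix.trace ((Y * Xᵀ) * (X * Yᵀ)) = Matrix.trace (Y * (Xᵀ * X) * Yᵀ) := by
    congr 1
    simp only [Matrix.mul_assoc]
  have e4 : Matrix.trace ((X * Yᵀ) * (Y * Xᵀ)) = Matrix.trace (Y * (Xᵀ * X) * Yᵀ) := by
    rw [Matrix.trace_mul_comm (X * Yᵀ) (Y * Xᵀ)]
    exact e1
  have e2 : Matrix.trace ((Y * Xᵀ) * (Y * Xᵀ)) = Matrix.trace (Yᵀ * (X * Xᵀ) * Y) := by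
    calc Matrix.trace ((Y * Xᵀ) * (Y * Xᵀ))
        = Matrix.trace ((Y * Xᵀ * Y) * Xᵀ) := by rw [Matrix.mul_assoc (Y * Xᵀ) Y Xᵀ]
      _ = Matrix.trace (Xᵀ * (Y * Xᵀ * Y)) := by rw [Matrix.trace_mul_comm]
      _ = Matrix.trace ((Xᵀ * Y) * (Xᵀ * Y)) := by congr 1; simp only [Matrix.mul_assoc]
      _ = Matrix.trace ((Yᵀ * X) * (Xᵀ * Y)) := by rw [key2]
      _ = Matrix.trace (Yᵀ * (X * Xᵀ) * Y) := by congr 1; simp only [Matrix.mul_assoc]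
  have e3 : Matrix.trace ((X * Yᵀ) * (X * Yᵀ)) = Matrix.trace (Yᵀ * (X * Xᵀ) * Y) := by
    calc Matrix.trace ((X * Yᵀ) * (X * Yᵀ))
        = Matrix.trace ((X * Yᵀ * X) * Yᵀ) := by rw [Matrix.mul_assoc (X * Yᵀ) X Yᵀ]
      _ = Matrix.trace (Yᵀ * (X * Yᵀ * X)) := by rw [Matrix.trace_mul_comm]
      _ = Matrix.trace ((Yᵀ * X) * (Yᵀ * X)) := by congr 1; simp only [Matrix.mul_assoc]
      _ = Matrix.trace ((Xᵀ * Y) * (Yᵀ * X)) := by rw [key2]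
      _ = Matrix.trace ((Yᵀ * X) * (Xᵀ * Y)) := by rw [Matrix.trace_mul_comm]
      _ = Matrix.trace (Yᵀ * (X * Xᵀ) * Y) := by congr 1; simp only [Matrix.mul_assoc]
  rw [e1, e2, e3, e4]
  ring

theorem stmt_11 {n r : ℕ} (X Y : Matrix (Fin n) (Fin r) ℝ)
    (hsymm : (Xᵀ * Y).IsSymm) (hherm : (X * Xᵀ).IsHermitian) :
    frob (X * Yᵀ + Y * Xᵀ) ^ 2 ≥ 2 * kthLargestEig (X * Xᵀ) hherm r * frob Y ^ 2 := by
  classical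
  by_cases hr0 : r = 0
  · subst hr0
    have hY : frob Y = 0 := by
      unfold frob
      simp
    rw [hY]
    have := Real.sqrt_nonneg (∑ i, ∑ j, ((X * Yᵀ + Y * Xᵀ) i j)^2)
    unfold frob
    nlinarith [Real.sqrt_nonneg (∑ i, ∑ j, ((X * Yᵀ + Y * Xᵀ) i j)^2)]
  have hr1 : 1 ≤ r := Nat.one_le_iff_ne_zero.mpr hr0
  set μ := kthLargestEig (X * Xᵀ) hherm r with hμ
  have hXt : (Xᴴ : Matrix (Fin r) (Fin n) ℝ) = Xᵀ := Matrix.conjTranspose_eq_transpose_of_trivial X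
  have psdA : (X * Xᵀ).PosSemidef := by
    have := Matrix.posSemidef_self_mul_conjTranspose X
    rwa [hXt] at this
  have psdG : (Xᵀ * X).PosSemidef := by
    have := Matrix.posSemidef_conjTranspose_mul_self X
    rwa [hXt] at this
  have hG : (Xᵀ * X).IsHermitian := psdG.1
  -- key existence
  have hkey : ∃ a b : ℝ, ((X * Xᵀ) - a • 1).PosSemidef ∧ ((Xᵀ * X) - b • 1).PosSemidef
      ∧ μ ≤ a + b := by
    by_cases hnr : n ≤ r
    · refine ⟨μ, 0, ?_, by simpa using psdG, by simp⟩
      apply posSemidef_of_le_eigenvalues hherm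
      intro i
      have hmem : hherm.eigenvalues i ∈ ((Finset.univ.val.map hherm.eigenvalues).sort (· ≤ ·)) := by
        rw [← Multiset.mem_coe, Multiset.sort_eq]
        exact Multiset.mem_map_of_mem _ (Finset.mem_univ_val i)
      have hnr0 : n - r = 0 := Nat.sub_eq_zero_of_le hnr
      rw [hμ, kthLargestEig, hnr0]
      set l := ((Finset.univ.val.map hherm.eigenvalues).sort (· ≤ ·)) with hl
      have hsorted : l.Pairwise (· ≤ ·) := Multiset.pairwise_sort _ _
      match l, hsorted, hmem with
      | [], _, hmem => exact absurd hmem List.not_mem_nil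
      | (a :: t), hsorted, hmem =>
        simp only [List.getD_cons_zero]
        rcases List.mem_cons.mp hmem with h | h
        · exact le_of_eq h.symm
        · exact (List.pairwise_cons.mp hsorted).1 _ h
    · push_neg at hnr
      have hrn : r ≤ n := le_of_lt hnr
      -- minimal eigenvalue of G
      obtain ⟨i0, _, hi0min⟩ := Finset.exists_min_image Finset.univ hG.eigenvalues
        ⟨⟨0, hr1⟩, Finset.mem_univ _⟩
      set b := hG.eigenvalues i0 with hb
      have hb0 : 0 ≤ b := psdG.eigenvalues_nonneg i0
      refine ⟨0, b, by simpa using psdA, posSemidef_of_le_eigenvalues hG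
        (fun i => hi0min i (Finset.mem_univ i)), ?_⟩
      rw [zero_add]
      -- counting
      have hcount : n - r + 1 ≤
          (Finset.univ.filter (fun i => hherm.eigenvalues i ≤ b)).card := by
        have hZcard : (Finset.univ.filter (fun i => ¬ hherm.eigenvalues i = 0)).card
            = (X * Xᵀ).rank := by
          rw [hherm.rank_eq_card_non_zero_eigs, Fintype.card_subtype]
        have hsum := Finset.card_filter_add_card_filter_not
          (s := (Finset.univ : Finset (Fin n))) (p := fun i => hherm.eigenvalues i = 0)
        rw [Finset.card_univ, Fintype.card_fin] at hsum
        have hrankA : (X * Xᵀ).rank = X.rank := Matrix.rank_self_mul_transpose X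
        have hrankle : X.rank ≤ r := by
          have := Matrix.rank_le_card_width X
          simpa using this
        have hZsub : (Finset.univ.filter (fun i => hherm.eigenvalues i = 0)) ⊆
            (Finset.univ.filter (fun i => hherm.eigenvalues i ≤ b)) := by
          intro i hi
          rw [Finset.mem_filter] at hi ⊢
          exact ⟨hi.1, hi.2 ▸ hb0⟩
        by_cases hbz : b = 0
        · -- rank X ≤ r - 1
          have hGcard : (Finset.univ.filter (fun i => ¬ hG.eigenvalues i = 0)).card
              = (Xᵀ * X).rank := by
            rw [hG.rank_eq_card_non_zero_eigs, Fintype.card_subtype]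
          have hrankG : (Xᵀ * X).rank = X.rank := Matrix.rank_transpose_mul_self X
          have hsubG : (Finset.univ.filter (fun i => ¬ hG.eigenvalues i = 0)) ⊆
              Finset.univ.erase i0 := by
            intro i hi
            rw [Finset.mem_filter] at hi
            rw [Finset.mem_erase]
            refine ⟨?_, Finset.mem_univ _⟩
            rintro rfl
            exact hi.2 (hb ▸ hbz ▸ rfl)
          have hle : (Xᵀ * X).rank ≤ r - 1 := by
            rw [← hGcard]
            calc _ ≤ (Finset.univ.erase i0).card := Finset.card_le_card hsubG
              _ = r - 1 := by rw [Finset.card_erase_of_mem (Finset.mem_univ _),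
                Finset.card_univ, Fintype.card_fin]
          have := Finset.card_le_card hZsub
          omega
        · -- b > 0 : b is an eigenvalue of X * Xᵀ
          set w : Fin r → ℝ := ⇑(hG.eigenvectorBasis i0) with hw
          have hGw : (Xᵀ * X) *ᵥ w = b • w := hG.mulVec_eigenvectorBasis i0
          have hw0 : w ≠ 0 := by
            intro h
            apply hG.eigenvectorBasis.orthonormal.ne_zero i0
            ext j
            exact congrFun h j
          have hbw0 : b • w ≠ 0 := smul_ne_zero hbz hw0
          set v : Fin n → ℝ := X *ᵥ w with hv
          have hv0 : v ≠ 0 := by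
            intro h
            apply hbw0
            rw [← hGw, ← Matrix.mulVec_mulVec, ← hv, h, Matrix.mulVec_zero]
          have hAv : (X * Xᵀ) *ᵥ v = b • v := by
            rw [hv, Matrix.mulVec_mulVec, Matrix.mul_assoc, ← Matrix.mulVec_mulVec, hGw,
              Matrix.mulVec_smul]
          obtain ⟨j0, hj0⟩ := exists_eig_eq hherm hv0 hAv
          have hj0notin : j0 ∉ (Finset.univ.filter (fun i => hherm.eigenvalues i = 0)) := by
            rw [Finset.mem_filter]
            rintro ⟨-, h⟩
            exact hbz (hj0 ▸ h)
          have hsub2 : insert j0 (Finset.univ.filter (fun i => hherm.eigenvalues i = 0)) ⊆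
              (Finset.univ.filter (fun i => hherm.eigenvalues i ≤ b)) := by
            intro i hi
            rcases Finset.mem_insert.mp hi with rfl | hi
            · exact Finset.mem_filter.mpr ⟨Finset.mem_univ _, le_of_eq hj0⟩
            · exact hZsub hi
          have hcard2 := Finset.card_le_card hsub2
          rw [Finset.card_insert_of_notMem hj0notin] at hcard2
          omega
      -- convert count to multiset and apply sorted lemma
      rw [hμ, kthLargestEig]
      apply sorted_getD_le
      have : ((Finset.univ.val.map hherm.eigenvalues).filter (fun x => x ≤ b))
          = ((Finset.univ.val.filter (fun i => hherm.eigenvalues i ≤ b)).map hherm.eigenvalues) := by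
        rw [Multiset.filter_map]
        rfl
      rw [this, Multiset.card_map]
      have hval : (Finset.univ.val.filter (fun i => hherm.eigenvalues i ≤ b)).card
          = (Finset.univ.filter (fun i => hherm.eigenvalues i ≤ b)).card := rfl
      omega
  -- main computation
  obtain ⟨a, b, hA, hB, hab⟩ := hkey
  have h1 := trace_conj_lower hA Y
  have h2 := trace_conj_lower hB Yᵀ
  rw [Matrix.transpose_transpose] at h2
  have h2' : Matrix.trace ((Y : Matrix (Fin n) (Fin r) ℝ) * Yᵀ) = Matrix.trace (Yᵀ * Y) :=
    Matrix.trace_mul_comm Y Yᵀ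
  rw [h2'] at h2
  have ht0 : (0:ℝ) ≤ Matrix.trace (Yᵀ * Y) := by
    rw [← frob_sq_s11]
    positivity
  rw [ge_iff_le, frob_sq_s11, frob_sq_s11, trace_ident X Y hsymm]
  have hfin : μ * Matrix.trace (Yᵀ * Y) ≤ (a + b) * Matrix.trace (Yᵀ * Y) :=
    mul_le_mul_of_nonneg_right hab ht0
  nlinarith [h1, h2, hfin]
end
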